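/- arXiv:1007.4614 — 2 statements merged into one kernel-verified Lean document; each statement's English description precedes it below -/
import Mathlib

section
/- Double-counting identity (equations 2.7 and 2.8): Let p be a prime, q = p^e with e ≥ 1, n ≥ 1, ν a positive integer, and let l, d be integers with 0 ≤ d ≤ l ≤ n. Write t_{l',d'} for the number of F_{q^ν}-subspaces L of F_{q^ν}^n with dim L = l′ and dim(L ∩ L^q) = d′. Then the number of pairs (L, M) of F_{q^ν}-subspaces of F_{q^ν}^n with dim L = l, dim M = 2l − d, and L + L^q ⊆ M is equal both to Σ_{t=d}^{l} t_{l,t} · g_{n−2l+t, t−d}(q^ν) and to Σ_{u=l}^{2l−d} t_{2l−d, u} · g_{u, l}(q^ν). -/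
/-- The `p^e`-th power ring homomorphism (iterated Frobenius) on a field of characteristic `p`. -/
noncomputable def frobHom (F : Type*) [Field F] (p : ℕ) [Fact p.Prime] [CharP F p] (e : ℕ) :
    F →+* F where
  toFun x := x ^ p ^ e
  map_one' := one_pow _
  map_mul' x y := mul_pow x y _
  map_zero' := zero_pow (pow_ne_zero e (Fact.out : p.Prime).ne_zero)
  map_add' x y := add_pow_char_pow x y p e

instance (F : Type*) [Field F] [Finite F] (p : ℕ) [Fact p.Prime] [CharP F p] (e : ℕ) :
    RingHomSurjective (frobHom F p e) :=
  ⟨Finite.injective_iff_surjective.mp (frobHom F p e).injective⟩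

/-- The coordinatewise `p^e`-th power map on `Fin n → F`, as a semilinear map over `frobHom`. -/
noncomputable def frobLin (F : Type*) [Field F] (p : ℕ) [Fact p.Prime] [CharP F p] (e n : ℕ) :
    (Fin n → F) →ₛₗ[frobHom F p e] (Fin n → F) where
  toFun a := fun i => a i ^ p ^ e
  map_add' a b := funext fun i => add_pow_char_pow (a i) (b i) p e
  map_smul' c a := funext fun i => by
    simp [frobHom, mul_pow, Pi.smul_apply, smul_eq_mul]

/-- `L^q` for `q = p^e`: the image of the subspace `L ⊆ F^n` under the coordinatewise
`q`-th power (Frobenius) map; it is again an `F`-subspace. -/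
noncomputable def frobSub (F : Type*) [Field F] [Finite F] (p : ℕ) [Fact p.Prime] [CharP F p]
    (e n : ℕ) (L : Submodule F (Fin n → F)) : Submodule F (Fin n → F) :=
  L.map (frobLin F p e n)

open Polynomial in
/-- The Gaussian binomial polynomial
`g_{n,l}(x) = ∏_{i=0}^{l-1}(x^n − x^i) / ∏_{i=0}^{l-1}(x^l − x^i) ∈ ℤ[x]`
for `0 ≤ l ≤ n`, and `0` otherwise.  (The divisor is monic and the division is exact.) -/
noncomputable def gP (n l : ℤ) : Polynomial ℤ :=
  if 0 ≤ l ∧ l ≤ n then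
    (∏ i ∈ Finset.range l.toNat, ((X : Polynomial ℤ) ^ n.toNat - X ^ i)) /ₘ
      (∏ i ∈ Finset.range l.toNat, ((X : Polynomial ℤ) ^ l.toNat - X ^ i))
  else 0


open Polynomial Module


open Polynomial

/-- Recursively defined Gaussian binomial polynomial. -/
noncomputable def gauss : ℕ → ℕ → Polynomial ℤ
  | _, 0 => 1
  | 0, _+1 => 0
  | n+1, k+1 => gauss n k + X^(k+1) * gauss n (k+1)

@[simp] lemma gauss_zero (n : ℕ) : gauss n 0 = 1 := by cases n <;> rfl

lemma gauss_succ_succ (n k : ℕ) :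
    gauss (n+1) (k+1) = gauss n k + X^(k+1) * gauss n (k+1) := rfl

lemma gauss_of_lt : ∀ {n k : ℕ}, n < k → gauss n k = 0
  | 0, _+1, _ => rfl
  | n+1, k+1, h => by
    rw [gauss_succ_succ, gauss_of_lt (by omega), gauss_of_lt (by omega)]
    ring

@[simp] lemma gauss_self : ∀ n : ℕ, gauss n n = 1
  | 0 => rfl
  | n+1 => by rw [gauss_succ_succ, gauss_self n, gauss_of_lt (by omega)]; ring

/-- `∏_{j<k} (X^(n-j) - 1)`. -/
noncomputable def Qprod (n k : ℕ) : Polynomial ℤ :=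
  ∏ j ∈ Finset.range k, ((X : Polynomial ℤ) ^ (n - j) - 1)

@[simp] lemma Qprod_zero (n : ℕ) : Qprod n 0 = 1 := by simp [Qprod]

lemma Qprod_succ_left (n k : ℕ) (h : k ≤ n) :
    Qprod (n+1) (k+1) = Qprod n k * ((X:Polynomial ℤ)^(n+1) - 1) := by
  rw [Qprod, Finset.prod_range_succ']
  simp only [Nat.succ_sub_succ, Nat.sub_zero]
  rfl

lemma Qprod_succ_right (n k : ℕ) :
    Qprod n (k+1) = Qprod n k * ((X:Polynomial ℤ)^(n-k) - 1) := by
  rw [Qprod, Finset.prod_range_succ]; rfl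

lemma gauss_mul_Qprod : ∀ n k : ℕ, k ≤ n → gauss n k * Qprod k k = Qprod n k
  | n, 0, _ => by simp
  | 0, k+1, h => by omega
  | n+1, k+1, h => by
    rw [gauss_succ_succ, Qprod_succ_left n k (by omega),
      Qprod_succ_left k k le_rfl]
    rcases Nat.lt_or_ge k n with hk | hk
    · have IH1 := gauss_mul_Qprod n k (by omega)
      have IH2 := gauss_mul_Qprod n (k+1) hk
      rw [Qprod_succ_right n k] at IH2
      obtain ⟨m, rfl⟩ : ∃ m, n = k + (m + 1) := ⟨n - k - 1, by omega⟩
      have hsub : k + (m + 1) - k = m + 1 := by omega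
      rw [hsub] at IH2
      rw [Qprod_succ_left k k le_rfl] at IH2
      linear_combination (X^(k+1) - 1 : Polynomial ℤ) * IH1 + X^(k+1) * IH2
    · have hkn : k = n := by omega
      subst hkn
      rw [gauss_self, gauss_of_lt (by omega)]
      ring

/-- `∏_{i<k} (X^n - X^i)`. -/
noncomputable def Pprod (n k : ℕ) : Polynomial ℤ :=
  ∏ i ∈ Finset.range k, ((X : Polynomial ℤ) ^ n - X ^ i)

lemma Pprod_eq (n k : ℕ) (h : k ≤ n) :
    Pprod n k = X ^ (∑ i ∈ Finset.range k, i) * Qprod n k := by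
  rw [Pprod, Qprod, ← Finset.prod_pow_eq_pow_sum, ← Finset.prod_mul_distrib]
  refine Finset.prod_congr rfl fun i hi => ?_
  have hin : i ≤ n := le_trans (Nat.le_of_lt (Finset.mem_range.mp hi)) h
  rw [mul_sub, mul_one, ← pow_add]
  congr 2
  omega

lemma Pprod_monic (k : ℕ) : (Pprod k k).Monic := by
  refine monic_prod_of_monic _ _ fun i hi => ?_
  refine monic_X_pow_sub ?_
  calc (X ^ i : Polynomial ℤ).degree ≤ i := degree_X_pow_le i
  _ < k := by exact_mod_cast Nat.cast_lt.mpr (Finset.mem_range.mp hi)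

lemma Pprod_eq_gauss_mul (n k : ℕ) (h : k ≤ n) :
    Pprod n k = Pprod k k * gauss n k := by
  rw [Pprod_eq n k h, Pprod_eq k k le_rfl, ← gauss_mul_Qprod n k h]; ring

lemma gP_natCast (n k : ℕ) : gP (n : ℤ) (k : ℤ) = gauss n k := by
  rcases le_or_gt k n with h | h
  · rw [gP, if_pos ⟨Int.natCast_nonneg k, by exact_mod_cast h⟩]
    simp only [Int.toNat_natCast]
    rw [show (∏ i ∈ Finset.range k, ((X : Polynomial ℤ) ^ n - X ^ i)) = Pprod n k from rfl,
      show (∏ i ∈ Finset.range k, ((X : Polynomial ℤ) ^ k - X ^ i)) = Pprod k k from rfl,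
      Pprod_eq_gauss_mul n k h, mul_divByMonic_cancel_left _ (Pprod_monic k)]
  · rw [gP, if_neg (by push_cast; omega), gauss_of_lt h]

lemma gauss_eval_mul (n k : ℕ) (h : k ≤ n) (Q : ℤ) :
    (gauss n k).eval Q * ∏ i ∈ Finset.range k, (Q^k - Q^i)
      = ∏ i ∈ Finset.range k, (Q^n - Q^i) := by
  have := congrArg (eval Q) (Pprod_eq_gauss_mul n k h)
  simp only [Pprod, eval_mul, eval_prod, eval_sub, eval_pow, eval_X] at this
  linarith [this]

lemma cast_prod_sub (q m k : ℕ) (hq : 1 ≤ q) (h : k ≤ m) :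
    ((∏ i : Fin k, (q^m - q^i.val) : ℕ) : ℤ)
      = ∏ i ∈ Finset.range k, ((q:ℤ)^m - (q:ℤ)^i) := by
  rw [Fin.prod_univ_eq_prod_range (fun j => q^m - q^j) k, Nat.cast_prod]
  refine Finset.prod_congr rfl fun i hi => ?_
  have hle : q^i ≤ q^m :=
    Nat.pow_le_pow_right hq (le_trans (Nat.le_of_lt (Finset.mem_range.mp hi)) h)
  rw [Nat.cast_sub hle]; push_cast; ring

lemma moduleFinite_of_finite {R M : Type*} [Semiring R] [AddCommMonoid M] [Module R M]
    [Finite M] : Module.Finite R M := by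
  cases nonempty_fintype M
  exact ⟨⟨Finset.univ, by simp⟩⟩

section Counting

variable {F V : Type*} [Field F] [Fintype F] [AddCommGroup V] [Module F V] [Finite V]

instance : Finite (Submodule F V) :=
  Finite.of_injective (fun W => (W : Set V)) SetLike.coe_injective

/-- fiber of span over a fixed subspace W of dimension k -/
noncomputable def fiberEquiv (k : ℕ) (W : Submodule F V) (hW : finrank F W = k) :
    {s : {s : Fin k → V // LinearIndependent F s} //
        Submodule.span F (Set.range s.1) = W}
      ≃ {t : Fin k → W // LinearIndependent F t} where
  toFun s := ⟨fun i => ⟨s.1.1 i, by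
      exact le_of_eq s.2 (Submodule.subset_span (Set.mem_range_self i))⟩, by
    refine LinearIndependent.of_comp W.subtype ?_
    exact s.1.2⟩
  invFun t := ⟨⟨fun i => (t.1 i : V), t.2.map' W.subtype (Submodule.ker_subtype W)⟩, by
    have h1 : Set.range (fun i => (t.1 i : V)) = W.subtype '' Set.range t.1 := by
      rw [← Set.range_comp]; rfl
    rw [h1, ← Submodule.map_span]
    have h2 : Submodule.span F (Set.range t.1) = ⊤ := by
      have : FiniteDimensional F W := moduleFinite_of_finite
      refine Submodule.eq_top_of_finrank_eq ?_
      rw [finrank_span_eq_card t.2, Fintype.card_fin, hW]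
    rw [h2, Submodule.map_subtype_top]⟩
  left_inv s := by ext i; rfl
  right_inv t := by ext i; rfl

lemma card_subspaces (k : ℕ) :
    (Nat.card {W : Submodule F V // finrank F W = k} : ℤ)
      = (gauss (finrank F V) k).eval (Fintype.card F : ℤ) := by
  classical
  have : FiniteDimensional F V := moduleFinite_of_finite
  set q := Fintype.card F with hqdef
  have hq : 1 < q := Fintype.one_lt_card
  set n := finrank F V with hndef
  rcases le_or_gt k n with hk | hk
  · have hB : (0:ℤ) < ∏ i ∈ Finset.range k, ((q:ℤ)^k - (q:ℤ)^i) := by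
      refine Finset.prod_pos fun i hi => ?_
      have : ((q:ℤ))^i < (q:ℤ)^k := by
        refine pow_lt_pow_right₀ (by exact_mod_cast hq) (Finset.mem_range.mp hi)
      linarith
    refine mul_right_cancel₀ (ne_of_gt hB) ?_
    rw [gauss_eval_mul n k hk]
    -- counting identity
    have hT : (Nat.card {s : Fin k → V // LinearIndependent F s} : ℤ)
        = ∏ i ∈ Finset.range k, ((q:ℤ)^n - (q:ℤ)^i) := by
      rw [card_linearIndependent (K := F) hk, cast_prod_sub q n k (le_of_lt hq) hk]
    rw [← hT]
    -- decompose T as a sigma over subspaces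
    set T := {s : Fin k → V // LinearIndependent F s}
    set I := {W : Submodule F V // finrank F W = k}
    have fda : ∀ s : T, finrank F (Submodule.span F (Set.range s.1)) = k := fun s => by
      rw [finrank_span_eq_card s.2, Fintype.card_fin]
    let f : T → I := fun s => ⟨Submodule.span F (Set.range s.1), fda s⟩
    have : Finite T := by infer_instance
    letI : Fintype T := Fintype.ofFinite T
    letI : Fintype I := Fintype.ofFinite I
    have hfib : ∀ W : I, Nat.card {s : T // f s = W}
        = ∏ i : Fin k, (q^k - q^i.val) := by
      intro W
      have : Finite W.1 := by infer_instance
      have e1 : {s : T // f s = W} ≃ {s : T // Submodule.span F (Set.range s.1) = W.1} := by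
        refine Equiv.subtypeEquivRight fun s => ?_
        constructor
        · intro h; exact congrArg Subtype.val h
        · intro h; exact Subtype.ext h
      rw [Nat.card_congr (e1.trans (fiberEquiv k W.1 W.2)),
        card_linearIndependent (K := F) (V := W.1) (k := k) (by rw [W.2]), W.2]
    have hsig : Nat.card T = Nat.card I * ∏ i : Fin k, (q^k - q^i.val) := by
      rw [Nat.card_congr (Equiv.sigmaFiberEquiv f).symm]
      letI : ∀ W : I, Fintype {s : T // f s = W} := fun W => Fintype.ofFinite _
      rw [Nat.card_eq_fintype_card, Fintype.card_sigma]
      rw [Nat.card_eq_fintype_card]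
      rw [Finset.sum_congr rfl (fun W _ => by
        rw [← Nat.card_eq_fintype_card, hfib W])]
      rw [Finset.sum_const, Finset.card_univ, smul_eq_mul, ← Nat.card_eq_fintype_card]
    rw [hsig, Nat.cast_mul, cast_prod_sub q k k (le_of_lt hq) le_rfl]
  · have hie : IsEmpty {W : Submodule F V // finrank F W = k} := by
      refine ⟨fun W => ?_⟩
      have := Submodule.finrank_le W.1
      omega
    rw [Nat.card_of_isEmpty, gauss_of_lt hk]
    simp

end Counting

section Super

variable {F V : Type*} [Field F] [Fintype F] [AddCommGroup V] [Module F V] [Finite V]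

lemma le_comap_mkQ (U : Submodule F V) (W : Submodule F (V ⧸ U)) :
    U ≤ W.comap U.mkQ := fun x hx => by
  simp only [Submodule.mem_comap, Submodule.mkQ_apply]
  rw [(Submodule.Quotient.mk_eq_zero U).mpr hx]
  exact W.zero_mem

lemma finrank_comap_mkQ (U : Submodule F V) (W : Submodule F (V ⧸ U)) :
    finrank F (W.comap U.mkQ) = finrank F W + finrank F U := by
  have : FiniteDimensional F V := moduleFinite_of_finite
  set M := W.comap U.mkQ with hM
  have hUM : U ≤ M := le_comap_mkQ U W
  have hrange : LinearMap.range (U.mkQ.comp M.subtype) = W := by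
    rw [LinearMap.range_comp, Submodule.range_subtype, hM,
      Submodule.map_comap_eq_of_surjective (Submodule.mkQ_surjective U)]
  have hker : LinearMap.ker (U.mkQ.comp M.subtype) = U.comap M.subtype := by
    rw [LinearMap.ker_comp, Submodule.ker_mkQ]
  have h1 := LinearMap.finrank_range_add_finrank_ker (U.mkQ.comp M.subtype)
  rw [hrange, hker] at h1
  rw [LinearEquiv.finrank_eq (Submodule.comapSubtypeEquivOfLe hUM)] at h1
  omega

lemma card_superspaces (m : ℕ) (U : Submodule F V) (hum : finrank F U ≤ m) :
    (Nat.card {M : Submodule F V // finrank F M = m ∧ U ≤ M} : ℤ)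
      = (gauss (finrank F V - finrank F U) (m - finrank F U)).eval (Fintype.card F : ℤ) := by
  have : FiniteDimensional F V := moduleFinite_of_finite
  have : Finite (V ⧸ U) := Finite.of_surjective _ (Submodule.mkQ_surjective U)
  set u := finrank F U with hu
  have hquot : finrank F (V ⧸ U) = finrank F V - u := by
    have := Submodule.finrank_quotient_add_finrank U
    omega
  have e : {W : Submodule F (V ⧸ U) // finrank F W = m - u}
      ≃ {M : Submodule F V // finrank F M = m ∧ U ≤ M} := by
    refine ⟨fun W => ⟨W.1.comap U.mkQ, ?_, ?_⟩, fun M => ⟨(M.1).map U.mkQ, ?_⟩, ?_, ?_⟩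
    · rw [finrank_comap_mkQ U W.1, W.2]; omega
    · exact le_comap_mkQ U W.1
    · -- finrank of map = m - u
      have hcm : (M.1.map U.mkQ).comap U.mkQ = M.1 := by
        rw [Submodule.comap_map_mkQ, sup_eq_right.mpr M.2.2]
      have := finrank_comap_mkQ U (M.1.map U.mkQ)
      rw [hcm, M.2.1] at this
      omega
    · intro W
      refine Subtype.ext ?_
      show Submodule.map U.mkQ (Submodule.comap U.mkQ W.1) = W.1
      rw [Submodule.map_comap_eq_of_surjective (Submodule.mkQ_surjective U)]
    · intro M
      refine Subtype.ext ?_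
      show Submodule.comap U.mkQ (Submodule.map U.mkQ M.1) = M.1
      rw [Submodule.comap_map_mkQ, sup_eq_right.mpr M.2.2]
  rw [← Nat.card_congr e, card_subspaces, hquot]

lemma card_superspaces_zero (m : ℕ) (U : Submodule F V) (hum : m < finrank F U) :
    Nat.card {M : Submodule F V // finrank F M = m ∧ U ≤ M} = 0 := by
  have : FiniteDimensional F V := moduleFinite_of_finite
  have : IsEmpty {M : Submodule F V // finrank F M = m ∧ U ≤ M} := by
    refine ⟨fun M => ?_⟩
    have := Submodule.finrank_mono M.2.2
    rw [M.2.1] at this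
    omega
  exact Nat.card_of_isEmpty

end Super

section Frob
variable (F : Type*) [Field F] [Fintype F] (p : ℕ) [Fact p.Prime] [CharP F p] (e n : ℕ)

lemma frobLin_injective : Function.Injective (frobLin F p e n) := by
  intro a b h
  funext i
  have h2 : a i ^ p ^ e = b i ^ p ^ e := congrFun h i
  exact (frobHom F p e).injective h2

lemma frobLin_surjective : Function.Surjective (frobLin F p e n) :=
  Finite.injective_iff_surjective.mp (frobLin_injective F p e n)

lemma finrank_frob_map (L : Submodule F (Fin n → F)) :
    finrank F (L.map (frobLin F p e n)) = finrank F L := by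
  have hcard : Nat.card (L.map (frobLin F p e n)) = Nat.card L := by
    calc Nat.card (L.map (frobLin F p e n))
        = Nat.card ((frobLin F p e n) '' (L : Set (Fin n → F))) := by
          exact Nat.card_congr (Equiv.setCongr (Submodule.map_coe _ _))
      _ = Nat.card (L : Set (Fin n → F)) :=
          Nat.card_image_of_injective (frobLin_injective F p e n) _
      _ = Nat.card L := rfl
  letI : Fintype (L.map (frobLin F p e n)) := Fintype.ofFinite _
  letI : Fintype L := Fintype.ofFinite _
  have e1 : Fintype.card (L.map (frobLin F p e n))
      = Fintype.card F ^ finrank F (L.map (frobLin F p e n)) := card_eq_pow_finrank (K := F)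
  have e2 : Fintype.card L = Fintype.card F ^ finrank F L := card_eq_pow_finrank (K := F)
  rw [Nat.card_eq_fintype_card, Nat.card_eq_fintype_card, e1, e2] at hcard
  exact Nat.pow_right_injective (Fintype.one_lt_card) hcard

lemma finrank_frob_comap (M : Submodule F (Fin n → F)) :
    finrank F (M.comap (frobLin F p e n)) = finrank F M := by
  have h := finrank_frob_map F p e n (M.comap (frobLin F p e n))
  rw [Submodule.map_comap_eq_of_surjective (frobLin_surjective F p e n)] at h
  exact h.symm

lemma finrank_inf_comap (M : Submodule F (Fin n → F)) :
    finrank F (M ⊓ M.comap (frobLin F p e n) : Submodule F (Fin n → F))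
      = finrank F (M ⊓ M.map (frobLin F p e n) : Submodule F (Fin n → F)) := by
  have h1 : (M ⊓ M.comap (frobLin F p e n)).map (frobLin F p e n)
      = M.map (frobLin F p e n) ⊓ M := by
    rw [Submodule.map_inf _ (frobLin_injective F p e n),
      Submodule.map_comap_eq_of_surjective (frobLin_surjective F p e n)]
  rw [← finrank_frob_map F p e n (M ⊓ M.comap (frobLin F p e n)), h1, inf_comm]

end Frob

/-- generic grouping lemma -/
lemma group_sum {ι : Type*} [Fintype ι] (a b : ℕ) (g : ι → ℕ) (hg : ∀ i, g i ≤ b)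
    (c : ι → ℤ) (v : ℕ → ℤ) (hc : ∀ i, a ≤ g i → c i = v (g i))
    (hc0 : ∀ i, g i < a → c i = 0) :
    ∑ i : ι, c i = ∑ t ∈ Finset.Icc a b, (Nat.card {i // g i = t} : ℤ) * v t := by
  classical
  rw [← Finset.sum_fiberwise_of_maps_to
    (t := Finset.Icc 0 b) (g := g) (fun i _ => Finset.mem_Icc.mpr ⟨Nat.zero_le _, hg i⟩) c]
  rw [← Finset.sum_subset (Finset.Icc_subset_Icc_left (Nat.zero_le a))
    (fun t ht hts => ?_)]
  · refine Finset.sum_congr rfl fun t ht => ?_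
    have ha := (Finset.mem_Icc.mp ht).1
    rw [Finset.sum_congr rfl (fun i hi => by
      have : g i = t := by simpa using (Finset.mem_filter.mp hi).2
      rw [hc i (by omega), this]), Finset.sum_const, nsmul_eq_mul]
    congr 2
    rw [Nat.card_eq_fintype_card, Fintype.card_subtype]
  · refine Finset.sum_eq_zero fun i hi => ?_
    have h1 : g i = t := by simpa using (Finset.mem_filter.mp hi).2
    have h2 : t < a := by
      rcases Finset.mem_Icc.mp ht with ⟨-, h3⟩
      by_contra hcon
      exact hts (Finset.mem_Icc.mpr ⟨by omega, h3⟩)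
    exact hc0 i (by omega)


lemma frobSub_eq (F : Type*) [Field F] [Finite F] (p : ℕ) [Fact p.Prime] [CharP F p]
    (e n : ℕ) (L : Submodule F (Fin n → F)) :
    frobSub F p e n L = L.map (frobLin F p e n) := rfl

def pairSigmaEquiv {α β : Type*} (P : α → Prop) (Q : β → Prop) (R : α → β → Prop) :
    {x : α × β // P x.1 ∧ Q x.2 ∧ R x.1 x.2} ≃ Σ a : {a // P a}, {b // Q b ∧ R a.1 b} where
  toFun x := ⟨⟨x.1.1, x.2.1⟩, ⟨x.1.2, x.2.2.1, x.2.2.2⟩⟩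
  invFun y := ⟨(y.1.1, y.2.1), y.1.2, y.2.2.1, y.2.2.2⟩
  left_inv x := rfl
  right_inv y := rfl

def pairSigmaEquiv' {α β : Type*} (P : α → Prop) (Q : β → Prop) (R : α → β → Prop) :
    {x : α × β // P x.1 ∧ Q x.2 ∧ R x.1 x.2} ≃ Σ b : {b // Q b}, {a // P a ∧ R a b.1} where
  toFun x := ⟨⟨x.1.2, x.2.2.1⟩, ⟨x.1.1, x.2.1, x.2.2.2⟩⟩
  invFun y := ⟨(y.2.1, y.1.1), y.2.2.1, y.1.2, y.2.2.2⟩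
  left_inv x := rfl
  right_inv y := rfl

lemma card_sigma_int {ι : Type*} [Fintype ι] (f : ι → Type*) [∀ i, Finite (f i)] :
    (Nat.card (Σ i, f i) : ℤ) = ∑ i, (Nat.card (f i) : ℤ) := by
  letI : ∀ i, Fintype (f i) := fun i => Fintype.ofFinite _
  rw [Nat.card_eq_fintype_card, Fintype.card_sigma, Nat.cast_sum]
  exact Finset.sum_congr rfl fun i _ => by rw [Nat.card_eq_fintype_card]

noncomputable def subEquiv {F V : Type*} [Field F] [AddCommGroup V] [Module F V]
    (W : Submodule F V) (l : ℕ) :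
    {L' : Submodule F W // Module.finrank F L' = l}
      ≃ {L : Submodule F V // Module.finrank F L = l ∧ L ≤ W} where
  toFun L' := ⟨L'.1.map W.subtype, by
    rw [Submodule.finrank_map_subtype_eq]; exact L'.2, Submodule.map_subtype_le W L'.1⟩
  invFun L := ⟨L.1.comap W.subtype, by
    rw [LinearEquiv.finrank_eq (Submodule.comapSubtypeEquivOfLe L.2.2)]
    exact L.2.1⟩
  left_inv L' := Subtype.ext (by
    show Submodule.comap W.subtype (Submodule.map W.subtype L'.1) = L'.1
    rw [Submodule.comap_map_eq, Submodule.ker_subtype, sup_bot_eq])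
  right_inv L := Subtype.ext (by
    show Submodule.map W.subtype (Submodule.comap W.subtype L.1) = L.1
    rw [Submodule.map_comap_subtype, inf_eq_right.mpr L.2.2])

/-- **Double-counting identity (equations 2.7 and 2.8).**  For `q = p^e` and
`0 ≤ d ≤ l ≤ n`, the number of pairs `(L,M)` of `F_{q^ν}`-subspaces of `F_{q^ν}^n` with
`dim L = l`, `dim M = 2l − d` and `L + L^q ⊆ M` equals both
`Σ_{t=d}^{l} t_{l,t}·g_{n−2l+t, t−d}(q^ν)` and `Σ_{u=l}^{2l−d} t_{2l−d,u}·g_{u,l}(q^ν)`,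
where `t_{l',d'}` is the number of subspaces `L` with `dim L = l'`, `dim (L ∩ L^q) = d'`. -/
theorem double_counting_identity
    (p : ℕ) [Fact p.Prime] (e : ℕ) (he : 1 ≤ e) (n : ℕ) (hn : 1 ≤ n)
    (ν : ℕ) (hν : 0 < ν) (l d : ℕ) (hdl : d ≤ l) (hln : l ≤ n)
    (F : Type) [Field F] [Fintype F] [CharP F p] (hF : Fintype.card F = (p ^ e) ^ ν) :
    ((Nat.card {LM : Submodule F (Fin n → F) × Submodule F (Fin n → F) //
        Module.finrank F ↥LM.1 = l ∧ Module.finrank F ↥LM.2 = 2 * l - d ∧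
        LM.1 ⊔ frobSub F p e n LM.1 ≤ LM.2} : ℤ) =
      ∑ t ∈ Finset.Icc d l,
        (Nat.card {L : Submodule F (Fin n → F) //
            Module.finrank F ↥L = l ∧ Module.finrank F ↥(L ⊓ frobSub F p e n L) = t} : ℤ) *
          (gP ((n : ℤ) - 2 * l + t) ((t : ℤ) - d)).eval (((p : ℤ) ^ e) ^ ν)) ∧
    ((Nat.card {LM : Submodule F (Fin n → F) × Submodule F (Fin n → F) //
        Module.finrank F ↥LM.1 = l ∧ Module.finrank F ↥LM.2 = 2 * l - d ∧
        LM.1 ⊔ frobSub F p e n LM.1 ≤ LM.2} : ℤ) =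
      ∑ u ∈ Finset.Icc l (2 * l - d),
        (Nat.card {L : Submodule F (Fin n → F) //
            Module.finrank F ↥L = 2 * l - d ∧
            Module.finrank F ↥(L ⊓ frobSub F p e n L) = u} : ℤ) *
          (gP (u : ℤ) (l : ℤ)).eval (((p : ℤ) ^ e) ^ ν)) := by
  classical
  have hQcast : (Fintype.card F : ℤ) = ((p:ℤ)^e)^ν := by exact_mod_cast hF
  have hdim : finrank F (Fin n → F) = n := by
    simp [Module.finrank_pi]
  constructor
  · -- equation 2.7
    letI : Fintype {L : Submodule F (Fin n → F) // finrank F L = l} := Fintype.ofFinite _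
    rw [Nat.card_congr (pairSigmaEquiv (fun L : Submodule F (Fin n → F) => finrank F L = l)
      (fun M : Submodule F (Fin n → F) => finrank F M = 2*l-d)
      (fun L M => L ⊔ frobSub F p e n L ≤ M))]
    rw [card_sigma_int]
    have hg : ∀ L : {L : Submodule F (Fin n → F) // finrank F L = l},
        finrank F (L.1 ⊓ frobSub F p e n L.1 : Submodule F (Fin n → F)) ≤ l := by
      intro L
      have := Submodule.finrank_mono (inf_le_left :
        L.1 ⊓ frobSub F p e n L.1 ≤ L.1)
      rw [L.2] at this
      exact this
    have hc : ∀ L : {L : Submodule F (Fin n → F) // finrank F L = l},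
        d ≤ finrank F (L.1 ⊓ frobSub F p e n L.1 : Submodule F (Fin n → F)) →
        (Nat.card {M : Submodule F (Fin n → F) //
            finrank F M = 2*l-d ∧ L.1 ⊔ frobSub F p e n L.1 ≤ M} : ℤ)
          = (gP ((n : ℤ) - 2 * l + (finrank F (L.1 ⊓ frobSub F p e n L.1 :
              Submodule F (Fin n → F)) : ℕ))
              (((finrank F (L.1 ⊓ frobSub F p e n L.1 : Submodule F (Fin n → F)) : ℕ) : ℤ)
                - d)).eval (((p : ℤ) ^ e) ^ ν) := by
      intro L hd
      set t := finrank F (L.1 ⊓ frobSub F p e n L.1 : Submodule F (Fin n → F)) with ht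
      set U := L.1 ⊔ frobSub F p e n L.1 with hU
      have hfφ : finrank F (frobSub F p e n L.1) = l := by
        rw [frobSub_eq, finrank_frob_map, L.2]
      have hsum : finrank F U + t = l + l := by
        rw [hU, ht, Submodule.finrank_sup_add_finrank_inf_eq, hfφ, L.2]
      have htl : t ≤ l := hg L
      have hUn : finrank F U ≤ n := by
        have := Submodule.finrank_le U
        rwa [hdim] at this
      have hum : finrank F U ≤ 2*l - d := by omega
      rw [card_superspaces (2*l-d) U hum, hdim]
      have hU2 : finrank F U = 2*l - t := by omega
      rw [hU2]
      have h1 : ((n : ℤ) - 2 * l + t) = ((n - (2*l - t) : ℕ) : ℤ) := by omega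
      have h2 : ((t : ℤ) - d) = ((t - d : ℕ) : ℤ) := by omega
      have h3 : (2*l - d) - (2*l - t) = t - d := by omega
      rw [h1, h2, gP_natCast, ← hQcast, h3]
    have hc0 : ∀ L : {L : Submodule F (Fin n → F) // finrank F L = l},
        finrank F (L.1 ⊓ frobSub F p e n L.1 : Submodule F (Fin n → F)) < d →
        (Nat.card {M : Submodule F (Fin n → F) //
            finrank F M = 2*l-d ∧ L.1 ⊔ frobSub F p e n L.1 ≤ M} : ℤ) = 0 := by
      intro L hd
      have hfφ : finrank F (frobSub F p e n L.1) = l := by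
        rw [frobSub_eq, finrank_frob_map, L.2]
      have hsum : finrank F (L.1 ⊔ frobSub F p e n L.1 : Submodule F (Fin n → F))
          + finrank F (L.1 ⊓ frobSub F p e n L.1 : Submodule F (Fin n → F)) = l + l := by
        rw [Submodule.finrank_sup_add_finrank_inf_eq, hfφ, L.2]
      have htl := hg L
      have : Nat.card {M : Submodule F (Fin n → F) //
          finrank F M = 2*l-d ∧ L.1 ⊔ frobSub F p e n L.1 ≤ M} = 0 :=
        card_superspaces_zero (2*l-d) _ (by omega)
      rw [this]
      simp
    rw [group_sum d l _ hg _
      (fun t => (gP ((n : ℤ) - 2 * l + t) ((t : ℤ) - d)).eval (((p : ℤ) ^ e) ^ ν)) hc hc0]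
    refine Finset.sum_congr rfl fun t _ => ?_
    congr 2
    exact Nat.card_congr (Equiv.subtypeSubtypeEquivSubtypeInter
      (fun L : Submodule F (Fin n → F) => finrank F L = l)
      (fun L => finrank F (L ⊓ frobSub F p e n L : Submodule F (Fin n → F)) = t))
  · -- equation 2.8
    letI : Fintype {M : Submodule F (Fin n → F) // finrank F M = 2*l-d} := Fintype.ofFinite _
    rw [Nat.card_congr (pairSigmaEquiv' (fun L : Submodule F (Fin n → F) => finrank F L = l)
      (fun M : Submodule F (Fin n → F) => finrank F M = 2*l-d)
      (fun L M => L ⊔ frobSub F p e n L ≤ M))]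
    rw [card_sigma_int]
    have inner : ∀ M : {M : Submodule F (Fin n → F) // finrank F M = 2*l-d},
        (Nat.card {L : Submodule F (Fin n → F) //
          finrank F L = l ∧ L ⊔ frobSub F p e n L ≤ M.1} : ℤ)
        = (gauss (finrank F (M.1 ⊓ frobSub F p e n M.1 : Submodule F (Fin n → F))) l).eval
            (Fintype.card F : ℤ) := by
      intro M
      set W := M.1 ⊓ Submodule.comap (frobLin F p e n) M.1 with hW
      have e1 : {L : Submodule F (Fin n → F) //
            finrank F L = l ∧ L ⊔ frobSub F p e n L ≤ M.1}
          ≃ {L : Submodule F (Fin n → F) // finrank F L = l ∧ L ≤ W} := by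
        refine Equiv.subtypeEquivRight fun L => ?_
        rw [hW, frobSub_eq, sup_le_iff, Submodule.map_le_iff_le_comap, le_inf_iff]
      have e2 := subEquiv W l
      have hWrank : finrank F W
          = finrank F (M.1 ⊓ frobSub F p e n M.1 : Submodule F (Fin n → F)) := by
        rw [hW, frobSub_eq]
        exact finrank_inf_comap F p e n M.1
      rw [Nat.card_congr (e1.trans e2.symm), card_subspaces l, hWrank]
    have hg : ∀ M : {M : Submodule F (Fin n → F) // finrank F M = 2*l-d},
        finrank F (M.1 ⊓ frobSub F p e n M.1 : Submodule F (Fin n → F)) ≤ 2*l-d := by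
      intro M
      have := Submodule.finrank_mono (inf_le_left :
        M.1 ⊓ frobSub F p e n M.1 ≤ M.1)
      rw [M.2] at this
      exact this
    have hc : ∀ M : {M : Submodule F (Fin n → F) // finrank F M = 2*l-d},
        l ≤ finrank F (M.1 ⊓ frobSub F p e n M.1 : Submodule F (Fin n → F)) →
        (Nat.card {L : Submodule F (Fin n → F) //
            finrank F L = l ∧ L ⊔ frobSub F p e n L ≤ M.1} : ℤ)
          = (gP ((finrank F (M.1 ⊓ frobSub F p e n M.1 : Submodule F (Fin n → F)) : ℕ) : ℤ)
              (l : ℤ)).eval (((p : ℤ) ^ e) ^ ν) := by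
      intro M hl
      rw [inner M, gP_natCast, ← hQcast]
    have hc0 : ∀ M : {M : Submodule F (Fin n → F) // finrank F M = 2*l-d},
        finrank F (M.1 ⊓ frobSub F p e n M.1 : Submodule F (Fin n → F)) < l →
        (Nat.card {L : Submodule F (Fin n → F) //
            finrank F L = l ∧ L ⊔ frobSub F p e n L ≤ M.1} : ℤ) = 0 := by
      intro M hl
      rw [inner M, gauss_of_lt hl]
      simp
    rw [group_sum l (2*l-d) _ hg _
      (fun u => (gP (u : ℤ) (l : ℤ)).eval (((p : ℤ) ^ e) ^ ν)) hc hc0]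
    refine Finset.sum_congr rfl fun u _ => ?_
    congr 2
    exact Nat.card_congr (Equiv.subtypeSubtypeEquivSubtypeInter
      (fun M : Submodule F (Fin n → F) => finrank F M = 2*l-d)
      (fun M => finrank F (M ⊓ frobSub F p e n M : Submodule F (Fin n → F)) = u))
end

section
/- Block determinant in the proof of Theorem 5.1: Let n ≥ 4 and let r, s ≥ 1 be integers; put f(n) := 1 + rs + (rs)^2 + … + (rs)^{n−1} and N := f(n) − 1. Let Ã be the (n − 1 + N) × (n − 1 + N) integer matrix whose top-left (n−1) × (n−1) block is A(n−1, s, r, 0) (i.e. entry (i,j) equals s if i + j = n − 1, equals 1 + sr if i + j = n, equals r if i + j = n + 1, and 0 otherwise, for 1 ≤ i, j ≤ n − 1), whose top-right block has entry (i, j) equal to 1 if i = n − 1 and 0 otherwise, whose bottom-left block is the transpose of the top-right block, and whose bottom-right block is (−s)^{n−2} times the N × N identity matrix. Then det à = (−1)^{⌊(n−1)/2⌋}·(−s)^{(n−2)·(f(n)−1)}. -/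
/-- The `m × m` matrix `A(m,u,v,t)` (indices read `1,…,m`): entry `(i,j)` is `u` if
`i + j = m`, `1 + uv` if `i + j = m + 1`, `v` if `i + j = m + 2`, the `(m,m)` entry is `t`,
and all other entries are `0`. -/
def matA {R : Type*} [CommRing R] (m : ℕ) (u v t : R) : Matrix (Fin m) (Fin m) R :=
  Matrix.of fun i j =>
    if i.1 = m - 1 ∧ j.1 = m - 1 then t
    else if i.1 + j.1 + 2 = m then u
    else if i.1 + j.1 + 2 = m + 1 then 1 + u * v
    else if i.1 + j.1 + 2 = m + 2 then v
    else 0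

section Helpers

open Matrix Finset

variable {R : Type*} [CommRing R]

lemma val_succAbove {n : ℕ} (p : Fin (n+1)) (i : Fin n) :
    (p.succAbove i).1 = if i.1 < p.1 then i.1 else i.1 + 1 := by
  rcases Fin.lt_or_le i.castSucc p with h | h
  · rw [Fin.succAbove_of_castSucc_lt _ _ h]
    simp [Fin.lt_def] at h
    simp [h]
  · rw [Fin.succAbove_of_le_castSucc _ _ h]
    simp [Fin.le_def] at h
    rw [if_neg (by omega), Fin.val_succ]

/-- tridiagonal matrix with diagonal `1+uv`, superdiagonal `u`, subdiagonal `v`. -/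
def trid (m : ℕ) (u v : R) : Matrix (Fin m) (Fin m) R :=
  Matrix.of fun i j =>
    if i.1 = j.1 then 1 + u * v
    else if i.1 + 1 = j.1 then u
    else if j.1 + 1 = i.1 then v
    else 0

lemma det_trid (u v : R) : ∀ m, (trid m u v).det =
    ∑ k ∈ Finset.range (m+1), (u*v)^k := by
  intro m
  induction m using Nat.strong_induction_on with
  | _ m ih =>
    match m with
    | 0 => simp [trid]
    | 1 => simp [trid, Matrix.det_fin_one, Finset.sum_range_succ]
    | (k+2) =>
      rw [Matrix.det_succ_row_zero, Fin.sum_univ_succ, Fin.sum_univ_succ]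
      simp only [Fin.succ_zero_eq_one]
      have hz : ∀ j : Fin k, (trid (k+2) u v) 0 j.succ.succ = 0 := by
        intro j
        simp [trid, Fin.val_succ]
      rw [Finset.sum_eq_zero (fun j _ => by rw [hz]; ring)]
      have h00 : (trid (k+2) u v) 0 0 = 1 + u * v := by simp [trid]
      have h01 : (trid (k+2) u v) 0 1 = u := by
        simp [trid, Fin.val_one]
      have hm0 : (trid (k+2) u v).submatrix Fin.succ (0 : Fin (k+2)).succAbove
          = trid (k+1) u v := by
        ext i j
        simp only [Fin.succAbove_zero, Matrix.submatrix_apply, trid, Matrix.of_apply,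
          Fin.val_succ]
        split_ifs <;> first | rfl | contradiction | omega
      -- second minor
      have hm1 : ((trid (k+2) u v).submatrix Fin.succ (1 : Fin (k+2)).succAbove).det
          = v * (trid k u v).det := by
        rw [Matrix.det_succ_column_zero, Fin.sum_univ_succ]
        have hz1 : ∀ i : Fin k,
            ((trid (k+2) u v).submatrix Fin.succ (1 : Fin (k+2)).succAbove) i.succ 0 = 0 := by
          intro i
          simp only [Matrix.submatrix_apply, trid, Matrix.of_apply, Fin.val_succ, Fin.val_one, Fin.val_zero, zero_lt_one, if_true, Fin.isValue,
            val_succAbove]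
          split_ifs <;> first | rfl | contradiction | omega
        rw [Finset.sum_eq_zero (fun i _ => by rw [hz1]; ring)]
        have he : ((trid (k+2) u v).submatrix Fin.succ (1 : Fin (k+2)).succAbove) 0 0 = v := by
          simp only [Matrix.submatrix_apply, trid, Matrix.of_apply, Fin.val_succ, Fin.val_one, Fin.val_zero, zero_lt_one, if_true, Fin.isValue,
            val_succAbove]
          norm_num
        have hmm : ((trid (k+2) u v).submatrix Fin.succ
            (1 : Fin (k+2)).succAbove).submatrix (0 : Fin (k+1)).succAbove Fin.succ
            = trid k u v := by
          ext i j
          simp only [Fin.succAbove_zero, Matrix.submatrix_apply, trid, Matrix.of_apply,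
            Fin.val_succ, Fin.val_one, Fin.val_zero, zero_lt_one, if_true, Fin.isValue, val_succAbove]
          simp only [show ¬ ((j : ℕ) + 1 < 1) by omega, if_false]
          split_ifs <;> first | rfl | contradiction | omega
        rw [he, hmm]
        simp
      rw [hm0, hm1, h00, h01, ih (k+1) (by omega), ih k (by omega)]
      rw [Finset.sum_range_succ (fun j => (u*v)^j) (k+2), Finset.sum_range_succ _ (k+1)]
      simp only [Fin.val_zero, Fin.val_one, Fin.val_succ, pow_zero, pow_succ, pow_one]
      ring

/-- tridiagonal with an extra `t` in the bottom-left corner. -/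
def tridC (m : ℕ) (u v t : R) : Matrix (Fin m) (Fin m) R :=
  Matrix.of fun i j => if i.1 = m - 1 ∧ j.1 = 0 then t else trid m u v i j

lemma neg_pow_half (k : ℕ) : ((-1 : R))^k * (-1)^(k/2) = (-1)^((k+1)/2) := by
  rcases Nat.even_or_odd k with ⟨c, hc⟩ | ⟨c, hc⟩ <;> subst hc
  · rw [show (c+c)/2 = c by omega, show (c+c+1)/2 = c by omega, ← two_mul, pow_mul]
    norm_num
  · rw [show (2*c+1)/2 = c by omega, show (2*c+1+1)/2 = c+1 by omega, pow_succ,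
      pow_mul, pow_succ]
    norm_num

lemma det_tridC (u v t : R) (k : ℕ) :
    (tridC (k+3) u v t).det =
      (∑ j ∈ Finset.range (k+4), (u*v)^j) + t * ((-1)^(k+2) * u^(k+2)) := by
  have hrow : tridC (k+3) u v t = (trid (k+3) u v).updateRow (Fin.last (k+2))
      ((trid (k+3) u v (Fin.last (k+2))) + t • (fun j : Fin (k+3) => if j.1 = 0 then (1:R) else 0)) := by
    ext i j
    rcases eq_or_ne i (Fin.last (k+2)) with hi | hi
    · subst hi
      rw [Matrix.updateRow_self]
      simp only [tridC, trid, Matrix.of_apply, Pi.add_apply, Pi.smul_apply, smul_eq_mul,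
        Fin.val_last]
      split_ifs <;> first | ring1 | omega | (exfalso; omega)
    · rw [Matrix.updateRow_ne hi]
      have hiv : i.1 ≠ k + 2 := fun h => hi (Fin.ext (by simpa using h))
      simp only [tridC, Matrix.of_apply]
      rw [if_neg (by omega)]
  rw [hrow, Matrix.det_updateRow_add, Matrix.updateRow_eq_self, Matrix.det_updateRow_smul,
    det_trid]
  congr 1
  congr 1
  -- det of updateRow trid last e₀ = (-1)^(k+2) * u^(k+2)
  set E : Matrix (Fin (k+3)) (Fin (k+3)) R :=
    (trid (k+3) u v).updateRow (Fin.last (k+2)) (fun j : Fin (k+3) => if j.1 = 0 then (1:R) else 0) with hE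
  rw [Matrix.det_succ_row E (Fin.last (k+2)), Fin.sum_univ_succ]
  have tail : ∀ j : Fin (k+2), E (Fin.last (k+2)) j.succ = 0 := by
    intro j
    rw [hE, Matrix.updateRow_self]
    simp [Fin.val_succ]
  rw [Finset.sum_eq_zero (fun j _ => by rw [tail]; ring), add_zero]
  have h0 : E (Fin.last (k+2)) 0 = 1 := by
    rw [hE, Matrix.updateRow_self]
    simp
  rw [h0]
  have hmin : E.submatrix (Fin.last (k+2)).succAbove (0 : Fin (k+3)).succAbove =
      Matrix.of (fun i j : Fin (k+2) =>
        trid (k+3) u v i.castSucc j.succ) := by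
    ext i j
    simp only [Fin.succAbove_last, Fin.succAbove_zero, Matrix.submatrix_apply, Matrix.of_apply]
    rw [hE, Matrix.updateRow_ne (fun h => by
      have := Fin.castSucc_lt_last i
      exact absurd (h ▸ this) (lt_irrefl _))]
  rw [hmin]
  have htri : (Matrix.of (fun i j : Fin (k+2) => trid (k+3) u v i.castSucc j.succ)).det
      = u ^ (k+2) := by
    rw [Matrix.det_of_lowerTriangular _ (by
      intro i j hij
      have hij' : i.1 < j.1 := hij
      simp only [Matrix.of_apply, trid, Fin.coe_castSucc, Fin.val_succ]
      split_ifs <;> first | rfl | omega)]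
    have hd : ∀ i : Fin (k+2), trid (k+3) u v i.castSucc i.succ = u := by
      intro i
      simp only [trid, Matrix.of_apply, Fin.coe_castSucc, Fin.val_succ]
      rw [if_neg (by omega)]
      simp
    simp [hd]
  rw [htri]
  simp [Fin.val_last]

/-- the reversal (anti-identity) matrix. -/
def Jmat (m : ℕ) : Matrix (Fin m) (Fin m) R :=
  Matrix.of fun i j => if i.1 + j.1 = m - 1 then 1 else 0

lemma det_Jmat : ∀ m, (Jmat m : Matrix (Fin m) (Fin m) R).det = (-1)^(m/2) := by
  intro m
  induction m with
  | zero => simp [Jmat]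
  | succ k ih =>
    rw [Matrix.det_succ_row_zero, Finset.sum_eq_single (Fin.last k)]
    · have h1 : (Jmat (k+1) : Matrix _ _ R) 0 (Fin.last k) = 1 := by
        simp [Jmat]
      have h2 : (Jmat (k+1)).submatrix Fin.succ (Fin.last k).succAbove
          = (Jmat k : Matrix (Fin k) (Fin k) R) := by
        ext i j
        have hi := i.isLt
        simp only [Jmat, Matrix.submatrix_apply, Fin.succAbove_last, Matrix.of_apply,
          Fin.val_succ, Fin.coe_castSucc]
        split_ifs <;> first | rfl | omega
      rw [h1, h2, ih, Fin.val_last, mul_one]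
      exact neg_pow_half k
    · intro j _ hj
      have : (Jmat (k+1) : Matrix _ _ R) 0 j = 0 := by
        simp only [Jmat, Matrix.of_apply, Fin.val_zero, zero_add]
        rw [if_neg (fun h => hj (Fin.ext (by simpa using h)))]
      rw [this]
      ring
    · simp

def matA' {R : Type*} [CommRing R] (m : ℕ) (u v t : R) : Matrix (Fin m) (Fin m) R :=
  Matrix.of fun i j =>
    if i.1 = m - 1 ∧ j.1 = m - 1 then t
    else if i.1 + j.1 + 2 = m then u
    else if i.1 + j.1 + 2 = m + 1 then 1 + u * v
    else if i.1 + j.1 + 2 = m + 2 then v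
    else 0

lemma matA'_eq_mul (m : ℕ) (hm : 3 ≤ m) (u v t : R) :
    matA' m u v t = tridC m u v t * Jmat m := by
  ext i j
  have hi := i.isLt
  have hj := j.isLt
  rw [Matrix.mul_apply, Finset.sum_eq_single (⟨m-1-j.1, by omega⟩ : Fin m)]
  · have h1 : (Jmat m : Matrix (Fin m) (Fin m) R) ⟨m-1-j.1, by omega⟩ j = 1 := by
      simp only [Jmat, Matrix.of_apply]
      rw [if_pos (by omega)]
    rw [h1, mul_one]
    simp only [matA', tridC, trid, Matrix.of_apply]
    split_ifs <;> first | rfl | omega | (exfalso; omega)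
  · intro b _ hb
    have hb' : b.1 + j.1 ≠ m - 1 := by
      intro h
      exact hb (Fin.ext (show b.1 = m-1-j.1 by omega))
    have : (Jmat m : Matrix (Fin m) (Fin m) R) b j = 0 := by
      simp only [Jmat, Matrix.of_apply]
      rw [if_neg hb']
    rw [this, mul_zero]
  · intro h
    exact absurd (Finset.mem_univ _) h

lemma det_matA' (u v t : R) (k : ℕ) :
    (matA' (k+3) u v t).det =
      ((∑ j ∈ Finset.range (k+4), (u*v)^j) + t * ((-1)^(k+2) * u^(k+2))) * (-1)^((k+3)/2) := by
  rw [matA'_eq_mul (k+3) (by omega), Matrix.det_mul, det_tridC, det_Jmat]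


lemma matA_eq {R : Type*} [CommRing R] (m : ℕ) (u v t : R) :
    matA m u v t = matA' m u v t := rfl

end Helpers

/-- **Block determinant in the proof of Theorem 5.1.**  For `n ≥ 4` and integers
`r, s ≥ 1`, with `f(n) = 1 + rs + ⋯ + (rs)^{n−1}` and `N = f(n) − 1`, the determinant of
the block matrix `Ã` with blocks `A(n−1,s,r,0)`, the 0/1 matrix supported on the last
row, its transpose, and `(−s)^{n−2}·I_N`, equals
`(−1)^{⌊(n−1)/2⌋}·(−s)^{(n−2)(f(n)−1)}`. -/
theorem det_block_matrix (n : ℕ) (hn : 4 ≤ n) (r s : ℕ) (hr : 1 ≤ r) (hs : 1 ≤ s) :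
    (Matrix.fromBlocks
        (matA (n - 1) (s : ℤ) (r : ℤ) 0)
        (Matrix.of fun (i : Fin (n - 1))
            (_ : Fin ((∑ i ∈ Finset.range n, (r * s) ^ i) - 1)) =>
          if i.1 = n - 2 then (1 : ℤ) else 0)
        (Matrix.of fun (_ : Fin ((∑ i ∈ Finset.range n, (r * s) ^ i) - 1))
            (j : Fin (n - 1)) =>
          if j.1 = n - 2 then (1 : ℤ) else 0)
        ((-(s : ℤ)) ^ (n - 2) •
          (1 : Matrix (Fin ((∑ i ∈ Finset.range n, (r * s) ^ i) - 1))
            (Fin ((∑ i ∈ Finset.range n, (r * s) ^ i) - 1)) ℤ))).det =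
      (-1) ^ ((n - 1) / 2) *
        (-(s : ℤ)) ^ ((n - 2) * ((∑ i ∈ Finset.range n, (r * s) ^ i) - 1)) := by
  obtain ⟨k, rfl⟩ : ∃ k, n = k + 4 := ⟨n - 4, by omega⟩
  show (Matrix.fromBlocks
        (matA (k+3) (s : ℤ) (r : ℤ) 0)
        (Matrix.of fun (i : Fin (k+3))
            (_ : Fin ((∑ i ∈ Finset.range (k+4), (r * s) ^ i) - 1)) =>
          if i.1 = k + 2 then (1 : ℤ) else 0)
        (Matrix.of fun (_ : Fin ((∑ i ∈ Finset.range (k+4), (r * s) ^ i) - 1))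
            (j : Fin (k+3)) =>
          if j.1 = k + 2 then (1 : ℤ) else 0)
        ((-(s : ℤ)) ^ (k + 2) •
          (1 : Matrix (Fin ((∑ i ∈ Finset.range (k+4), (r * s) ^ i) - 1))
            (Fin ((∑ i ∈ Finset.range (k+4), (r * s) ^ i) - 1)) ℤ))).det =
      (-1) ^ ((k + 3) / 2) *
        (-(s : ℤ)) ^ ((k + 2) * ((∑ i ∈ Finset.range (k+4), (r * s) ^ i) - 1))
  set f : ℕ := ∑ i ∈ Finset.range (k + 4), (r * s) ^ i with hfdef
  set N : ℕ := f - 1 with hNdef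
  have hf : 1 ≤ f := by
    have h0 : (0 : ℕ) ∈ Finset.range (k + 4) := by simp
    calc 1 = (r*s)^0 := by simp
    _ ≤ f := Finset.single_le_sum (fun i _ => Nat.zero_le _) h0
  have hs' : ((s : ℚ)) ≠ 0 := by positivity
  set c : ℚ := (-(s : ℚ)) ^ (k + 2) with hcdef
  have hc : c ≠ 0 := pow_ne_zero _ (by simpa using hs')
  apply Int.cast_injective (α := ℚ)
  have hcast : ∀ (M : Matrix (Fin (k+3) ⊕ Fin N) (Fin (k+3) ⊕ Fin N) ℤ),
      ((M.det : ℤ) : ℚ) = (M.map (Int.cast : ℤ → ℚ)).det := fun M =>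
    RingHom.map_det (Int.castRingHom ℚ) M
  rw [hcast]
  have hA : (matA (k+3) (s : ℤ) (r : ℤ) 0).map (Int.cast : ℤ → ℚ)
      = matA (k+3) (s : ℚ) (r : ℚ) 0 := by
    ext i j
    simp [matA, apply_ite (fun x : ℤ => (x : ℚ))]
  have hB : (Matrix.of fun (i : Fin (k+3)) (_ : Fin N) =>
        if i.1 = k + 2 then (1 : ℤ) else 0).map (Int.cast : ℤ → ℚ)
      = Matrix.of fun (i : Fin (k+3)) (_ : Fin N) => if i.1 = k + 2 then (1 : ℚ) else 0 := by
    ext i j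
    simp [apply_ite (fun x : ℤ => (x : ℚ))]
  have hC : (Matrix.of fun (_ : Fin N) (j : Fin (k+3)) =>
        if j.1 = k + 2 then (1 : ℤ) else 0).map (Int.cast : ℤ → ℚ)
      = Matrix.of fun (_ : Fin N) (j : Fin (k+3)) => if j.1 = k + 2 then (1 : ℚ) else 0 := by
    ext i j
    simp [apply_ite (fun x : ℤ => (x : ℚ))]
  have hD : ((-(s : ℤ)) ^ (k + 2) • (1 : Matrix (Fin N) (Fin N) ℤ)).map (Int.cast : ℤ → ℚ)
      = c • (1 : Matrix (Fin N) (Fin N) ℚ) := by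
    ext i j
    simp only [Matrix.map_apply, Matrix.smul_apply, Matrix.one_apply, smul_eq_mul, mul_ite,
      mul_one, mul_zero, apply_ite (fun x : ℤ => (x : ℚ)), Int.cast_zero, hcdef]
    split_ifs <;> push_cast <;> ring
  rw [Matrix.fromBlocks_map, hA, hB, hC, hD]
  haveI : Invertible (c • (1 : Matrix (Fin N) (Fin N) ℚ)) :=
    ⟨c⁻¹ • 1, by rw [Matrix.smul_mul, Matrix.one_mul, smul_smul,
        inv_mul_cancel₀ hc, one_smul], by rw [Matrix.smul_mul, Matrix.one_mul, smul_smul,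
        mul_inv_cancel₀ hc, one_smul]⟩
  rw [Matrix.det_fromBlocks₂₂]
  have hinv : ⅟(c • (1 : Matrix (Fin N) (Fin N) ℚ)) = c⁻¹ • 1 :=
    invOf_eq_right_inv (by rw [Matrix.smul_mul, Matrix.one_mul, smul_smul,
      mul_inv_cancel₀ hc, one_smul])
  have hschur : matA (k+3) (s : ℚ) (r : ℚ) 0 -
      (Matrix.of fun (i : Fin (k+3)) (_ : Fin N) => if i.1 = k + 2 then (1 : ℚ) else 0) *
        ⅟(c • (1 : Matrix (Fin N) (Fin N) ℚ)) *
      (Matrix.of fun (_ : Fin N) (j : Fin (k+3)) => if j.1 = k + 2 then (1 : ℚ) else 0)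
      = matA (k+3) (s : ℚ) (r : ℚ) (-((N : ℚ) / c)) := by
    rw [hinv, Matrix.mul_smul, Matrix.mul_one, Matrix.smul_mul]
    ext i j
    simp only [Matrix.sub_apply, Matrix.smul_apply, Matrix.mul_apply, Matrix.of_apply,
      smul_eq_mul]
    rw [Finset.sum_const, Finset.card_univ, Fintype.card_fin, nsmul_eq_mul]
    simp only [matA, Matrix.of_apply]
    split_ifs <;> first | ring1 | (exfalso; omega)
  rw [hschur, matA_eq, det_matA']
  rw [Matrix.det_smul, Matrix.det_one, Fintype.card_fin, mul_one]
  have hSq : ∑ j ∈ Finset.range (k+4), ((s : ℚ) * (r : ℚ))^j = (f : ℚ) := by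
    rw [hfdef]
    push_cast
    exact Finset.sum_congr rfl fun i _ => by ring
  have hterm : (-((N:ℚ)/c)) * ((-1)^(k+2) * (s:ℚ)^(k+2)) = -(N:ℚ) := by
    rw [show ((-1:ℚ))^(k+2) * (s:ℚ)^(k+2) = c from by rw [hcdef, neg_pow]; ring]
    rw [neg_mul, div_mul_cancel₀ _ hc]
  rw [hSq, hterm]
  have hNq : ((N:ℚ)) = (f:ℚ) - 1 := by
    rw [hNdef, Nat.cast_sub hf, Nat.cast_one]
  rw [hNq, hcdef, ← pow_mul]
  push_cast
  ring
end
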